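/- Let f : 2^[n] → ℝ₊ be a monotone submodular set function, let A ∈ ℝ₊^{m×n} be a nonnegative matrix, b ∈ ℝ₊^m, let w ∈ ℝ₊^m be nonnegative weights, let S ⊆ [n], and let α > 0 satisfy α · f_S(j) ≤ Σ_{i=1}^m A_{ij} w_i for every j ∈ [n]∖S. Then for every S* ⊆ [n] that is feasible (Σ_{j∈S*} A_{ij} ≤ b_i for all i ∈ [m]), it holds that f(S*) ≤ f(S) + (Σ_{i=1}^m b_i w_i) / α. -/

import Mathlib

/-- Let `f : 2^[n] → ℝ₊` be a monotone submodular set function,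
`A ∈ ℝ₊^{m×n}` nonnegative, `b ∈ ℝ₊^m`, `w ∈ ℝ₊^m` nonnegative weights, `S ⊆ [n]`,
and `α > 0` with `α · f_S(j) ≤ Σ_i A_{ij} w_i` for every `j ∉ S`. Then for every
feasible `S*` (i.e. `Σ_{j∈S*} A_{ij} ≤ b_i` for all `i`),
`f(S*) ≤ f(S) + (Σ_i b_i w_i) / α`. -/
theorem stmt_2 (m n : ℕ) (f : Finset (Fin n) → ℝ)
    (hf_nonneg : ∀ S, 0 ≤ f S)
    (hf_mono : ∀ S T : Finset (Fin n), S ⊆ T → f S ≤ f T)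
    (hf_submod : ∀ S T : Finset (Fin n), f (S ∪ T) + f (S ∩ T) ≤ f S + f T)
    (A : Fin m → Fin n → ℝ) (hA : ∀ i j, 0 ≤ A i j)
    (b : Fin m → ℝ) (hb : ∀ i, 0 ≤ b i)
    (w : Fin m → ℝ) (hw : ∀ i, 0 ≤ w i)
    (S : Finset (Fin n)) (α : ℝ) (hα : 0 < α)
    (hsel : ∀ j : Fin n, j ∉ S → α * (f (insert j S) - f S) ≤ ∑ i, A i j * w i)
    (Sstar : Finset (Fin n)) (hfeas : ∀ i, ∑ j ∈ Sstar, A i j ≤ b i) :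
    f Sstar ≤ f S + (∑ i, b i * w i) / α := by
  -- key: f (S ∪ T) ≤ f S + ∑_{j ∈ T \ S} (f (insert j S) - f S)
  have key : ∀ T : Finset (Fin n),
      f (S ∪ T) ≤ f S + ∑ j ∈ T \ S, (f (insert j S) - f S) := by
    intro T
    induction T using Finset.induction_on with
    | empty => simp
    | @insert a T ha ih =>
      by_cases haS : a ∈ S
      · have h1 : S ∪ insert a T = S ∪ T := by
          ext x; simp only [Finset.mem_union, Finset.mem_insert]
          constructor
          · rintro (h | rfl | h) <;> simp_all
          · rintro (h | h) <;> simp_all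
        have h2 : insert a T \ S = T \ S := by
          ext x; simp only [Finset.mem_sdiff, Finset.mem_insert]
          constructor
          · rintro ⟨rfl | h, hx⟩ <;> simp_all
          · rintro ⟨h, hx⟩; exact ⟨Or.inr h, hx⟩
        rw [h1, h2]; exact ih
      · have h2 : insert a T \ S = insert a (T \ S) := by
          ext x; simp only [Finset.mem_sdiff, Finset.mem_insert]
          constructor
          · rintro ⟨rfl | h, hx⟩
            · exact Or.inl rfl
            · exact Or.inr ⟨h, hx⟩
          · rintro (rfl | ⟨h, hx⟩)
            · exact ⟨Or.inl rfl, haS⟩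
            · exact ⟨Or.inr h, hx⟩
        have haTS : a ∉ T \ S := by simp [ha]
        rw [h2, Finset.sum_insert haTS]
        have hsub := hf_submod (insert a S) (S ∪ T)
        have hun : insert a S ∪ (S ∪ T) = S ∪ insert a T := by
          ext x
          simp only [Finset.mem_union, Finset.mem_insert]
          tauto
        have hint : insert a S ∩ (S ∪ T) = S := by
          ext x
          simp only [Finset.mem_inter, Finset.mem_insert, Finset.mem_union]
          constructor
          · rintro ⟨rfl | h, hx | hx⟩ <;> first | exact absurd hx haS | exact absurd hx ha | assumption
          · intro hx; exact ⟨Or.inr hx, Or.inl hx⟩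
        rw [hun, hint] at hsub
        linarith
  -- marginals bounded
  have hmarg : ∑ j ∈ Sstar \ S, (f (insert j S) - f S)
      ≤ (∑ i, b i * w i) / α := by
    have step1 : ∑ j ∈ Sstar \ S, (f (insert j S) - f S)
        ≤ ∑ j ∈ Sstar \ S, (∑ i, A i j * w i) / α := by
      apply Finset.sum_le_sum
      intro j hj
      have hjS : j ∉ S := (Finset.mem_sdiff.mp hj).2
      have := hsel j hjS
      rw [le_div_iff₀ hα]
      linarith [hsel j hjS]
    have step2 : ∑ j ∈ Sstar \ S, (∑ i, A i j * w i) / α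
        ≤ ∑ j ∈ Sstar, (∑ i, A i j * w i) / α := by
      apply Finset.sum_le_sum_of_subset_of_nonneg (Finset.sdiff_subset)
      intro j _ _
      apply div_nonneg _ hα.le
      exact Finset.sum_nonneg fun i _ => mul_nonneg (hA i j) (hw i)
    have step3 : ∑ j ∈ Sstar, (∑ i, A i j * w i) / α
        ≤ (∑ i, b i * w i) / α := by
      rw [← Finset.sum_div]
      gcongr
      rw [Finset.sum_comm]
      apply Finset.sum_le_sum
      intro i _
      rw [← Finset.sum_mul]
      exact mul_le_mul_of_nonneg_right (hfeas i) (hw i)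
    linarith
  have h1 : f Sstar ≤ f (S ∪ Sstar) := hf_mono _ _ Finset.subset_union_right
  linarith [key Sstar]
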